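/- Let $q:[0,1]\to[0,\infty)$ be continuous, smooth and positive on $[0,1)$, with $\dot q(0)=0$, $q(1)=0$, satisfying $\ddot q(t) = -2/q(t)^2 - f$ on $[0,1)$ for a constant $f\geq 0$. Then $q$ is strictly concave and strictly decreasing on $(0,1)$, its maximum $q^{\max}=q(0)$ satisfies $1\leq q^{\max}\leq 2+f/2$, and its mean $\bar q = \int_0^1 q(t)dt$ satisfies $q^{\max}/2 \leq \bar q \leq q^{\max}$. -/

import Mathlib

open MeasureTheory

lemma aux_anti (F F' : ℝ → ℝ) (hc : ContinuousOn F (Set.Ico 0 1))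
    (hd : ∀ x ∈ Set.Ioo (0:ℝ) 1, HasDerivAt F (F' x) x)
    (hs : ∀ x ∈ Set.Ioo (0:ℝ) 1, F' x ≤ 0) :
    ∀ t ∈ Set.Ico (0:ℝ) 1, F t ≤ F 0 := by
  have h := antitoneOn_of_deriv_nonpos (convex_Ico 0 1) hc
    (by
      rw [interior_Ico]
      exact fun x hx => (hd x hx).differentiableAt.differentiableWithinAt)
    (by
      rw [interior_Ico]
      intro x hx
      rw [(hd x hx).deriv]
      exact hs x hx)
  exact fun t ht => h ⟨le_refl 0, one_pos⟩ ht ht.1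

lemma aux_mono (F F' : ℝ → ℝ) (hc : ContinuousOn F (Set.Ico 0 1))
    (hd : ∀ x ∈ Set.Ioo (0:ℝ) 1, HasDerivAt F (F' x) x)
    (hs : ∀ x ∈ Set.Ioo (0:ℝ) 1, 0 ≤ F' x) :
    ∀ t ∈ Set.Ico (0:ℝ) 1, F 0 ≤ F t := by
  have h := monotoneOn_of_deriv_nonneg (convex_Ico 0 1) hc
    (by
      rw [interior_Ico]
      exact fun x hx => (hd x hx).differentiableAt.differentiableWithinAt)
    (by
      rw [interior_Ico]
      intro x hx
      rw [(hd x hx).deriv]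
      exact hs x hx)
  exact fun t ht => h ⟨le_refl 0, one_pos⟩ ht ht.1

set_option maxHeartbeats 1000000 in
/-- Let `q : [0,1] → [0,∞)` be continuous, smooth and positive on `[0,1)`,
with `q̇(0) = 0`, `q(1) = 0`, solving `q̈ = -2/q² - f` on `[0,1)` with a
constant `f ≥ 0`. Then `q` is strictly concave on `[0,1]`, strictly
decreasing on `(0,1)`, its maximum `q(0)` satisfies `1 ≤ q(0) ≤ 2 + f/2`,
and its mean satisfies `q(0)/2 ≤ ∫₀¹ q ≤ q(0)`. -/
theorem stmt_7 (q q' q'' : ℝ → ℝ) (f : ℝ) (hf : 0 ≤ f)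
    (hcont : ContinuousOn q (Set.Icc 0 1))
    (hnonneg : ∀ t ∈ Set.Icc (0:ℝ) 1, 0 ≤ q t)
    (hpos : ∀ t ∈ Set.Ico (0:ℝ) 1, 0 < q t)
    (hq' : ∀ t ∈ Set.Ico (0:ℝ) 1, HasDerivAt q (q' t) t)
    (hq'' : ∀ t ∈ Set.Ico (0:ℝ) 1, HasDerivAt q' (q'' t) t)
    (hq'0 : q' 0 = 0) (hq1 : q 1 = 0)
    (hODE : ∀ t ∈ Set.Ico (0:ℝ) 1, q'' t = -2 / (q t) ^ 2 - f) :
    StrictConcaveOn ℝ (Set.Icc 0 1) q ∧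
    StrictAntiOn q (Set.Ioo 0 1) ∧
    1 ≤ q 0 ∧ q 0 ≤ 2 + f / 2 ∧
    q 0 / 2 ≤ ∫ t in (0:ℝ)..1, q t ∧ (∫ t in (0:ℝ)..1, q t) ≤ q 0 := by
  have hIoo : Set.Ioo (0:ℝ) 1 ⊆ Set.Ico 0 1 := Set.Ioo_subset_Ico_self
  have h0 : (0:ℝ) ∈ Set.Ico (0:ℝ) 1 := ⟨le_refl 0, one_pos⟩
  have hq0 : 0 < q 0 := hpos 0 h0
  have hqc : ContinuousOn q (Set.Ico 0 1) := fun t ht => (hq' t ht).continuousAt.continuousWithinAt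
  have hq'c : ContinuousOn q' (Set.Ico 0 1) := fun t ht => (hq'' t ht).continuousAt.continuousWithinAt
  have hqne : ∀ t ∈ Set.Ico (0:ℝ) 1, q t ≠ 0 := fun t ht => (hpos t ht).ne'
  -- q'' < 0 on Ico
  have hq''neg : ∀ t ∈ Set.Ico (0:ℝ) 1, q'' t < 0 := by
    intro t ht
    rw [hODE t ht]
    have h1 : 0 < 2 / q t ^ 2 := div_pos (by norm_num) (pow_pos (hpos t ht) 2)
    rw [neg_div]
    linarith
  -- q' < 0 on Ioo
  have hq'anti : StrictAntiOn q' (Set.Ico 0 1) := by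
    apply strictAntiOn_of_deriv_neg (convex_Ico 0 1) hq'c
    rw [interior_Ico]
    intro x hx
    rw [(hq'' x (hIoo hx)).deriv]
    exact hq''neg x (hIoo hx)
  have hq'neg : ∀ t ∈ Set.Ioo (0:ℝ) 1, q' t < 0 := by
    intro t ht
    have h := hq'anti h0 (hIoo ht) ht.1
    rwa [hq'0] at h
  -- q strictly decreasing on Icc
  have hQanti : StrictAntiOn q (Set.Icc 0 1) := by
    apply strictAntiOn_of_deriv_neg (convex_Icc 0 1) hcont
    rw [interior_Icc]
    intro x hx
    rw [(hq' x (hIoo hx)).deriv]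
    exact hq'neg x hx
  have hqle : ∀ t ∈ Set.Icc (0:ℝ) 1, q t ≤ q 0 := by
    intro t ht
    rcases eq_or_lt_of_le ht.1 with h | h
    · rw [← h]
    · exact (hQanti (Set.left_mem_Icc.2 zero_le_one) ht h).le
  -- strict concavity
  have hconc : StrictConcaveOn ℝ (Set.Icc 0 1) q := by
    apply strictConcaveOn_of_deriv2_neg (convex_Icc 0 1) hcont
    rw [interior_Icc]
    intro x hx
    have hev : deriv q =ᶠ[nhds x] q' := by
      filter_upwards [isOpen_Ioo.mem_nhds hx] with s hs
      exact (hq' s (hIoo hs)).deriv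
    have h2 : deriv^[2] q x = deriv (deriv q) x := rfl
    rw [h2, hev.deriv_eq, (hq'' x (hIoo hx)).deriv]
    exact hq''neg x (hIoo hx)
  -- energy identity
  have hE : ∀ t ∈ Set.Ico (0:ℝ) 1,
      HasDerivAt (fun s => q' s ^ 2 - 4 / q s + 2 * f * q s) 0 t := by
    intro t ht
    have hne : q t ≠ 0 := hqne t ht
    have h1 : HasDerivAt (fun s => q' s ^ 2) ((2:ℕ) * q' t ^ (2-1) * q'' t) t := (hq'' t ht).pow 2
    have h2 : HasDerivAt (fun s => 4 / q s) ((0 * q t - 4 * q' t) / q t ^ 2) t :=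
      (hasDerivAt_const t 4).div (hq' t ht) hne
    have h3 : HasDerivAt (fun s => 2 * f * q s) (2 * f * q' t) t := (hq' t ht).const_mul _
    have h := (h1.sub h2).add h3
    refine h.congr_deriv ?_
    rw [hODE t ht]
    field_simp
    ring
  have hEc : ContinuousOn (fun s => q' s ^ 2 - 4 / q s + 2 * f * q s) (Set.Ico 0 1) :=
    ((hq'c.pow 2).sub (continuousOn_const.div hqc hqne)).add (continuousOn_const.mul hqc)
  have hEeq : ∀ t ∈ Set.Ico (0:ℝ) 1,
      q' t ^ 2 - 4 / q t + 2 * f * q t = q' 0 ^ 2 - 4 / q 0 + 2 * f * q 0 := by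
    intro t ht
    have h1 := aux_anti _ (fun _ => (0:ℝ)) hEc (fun x hx => hE x (hIoo hx))
      (fun x _ => le_refl 0) t ht
    have h2 := aux_mono _ (fun _ => (0:ℝ)) hEc (fun x hx => hE x (hIoo hx))
      (fun x _ => le_refl 0) t ht
    exact le_antisymm h1 h2
  -- third derivative of q on Ioo
  have hq''d : ∀ x ∈ Set.Ioo (0:ℝ) 1, HasDerivAt q'' (4 * q' x / q x ^ 3) x := by
    intro x hx
    have hne : q x ≠ 0 := hqne x (hIoo hx)
    have hform : HasDerivAt (fun s => -2 / q s ^ 2 - f)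
        ((0 * q x ^ 2 - (-2) * ((2:ℕ) * q x ^ (2 - 1) * q' x)) / (q x ^ 2) ^ 2) x :=
      ((hasDerivAt_const x (-2:ℝ)).div ((hq' x (hIoo hx)).pow 2) (pow_ne_zero 2 hne)).sub_const f
    have heq : (0 * q x ^ 2 - (-2) * ((2:ℕ) * q x ^ (2 - 1) * q' x)) / (q x ^ 2) ^ 2
        = 4 * q' x / q x ^ 3 := by
      field_simp
      ring
    rw [heq] at hform
    apply hform.congr_of_eventuallyEq
    filter_upwards [isOpen_Ioo.mem_nhds hx] with s hs
    exact hODE s (hIoo hs)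
  -- continuity of q'' on Ico
  have hq''c : ContinuousOn q'' (Set.Ico 0 1) := by
    apply ContinuousOn.congr (f := fun s => -2 / q s ^ 2 - f)
      ((continuousOn_const.div (hqc.pow 2) (fun t ht => pow_ne_zero 2 (hqne t ht))).sub
        continuousOn_const) hODE
  -- G1 : t * q'' t - q' t ≤ 0 on Ico
  have hG1 : ∀ t ∈ Set.Ico (0:ℝ) 1, t * q'' t - q' t ≤ 0 := by
    have hc : ContinuousOn (fun s => s * q'' s - q' s) (Set.Ico 0 1) :=
      (continuousOn_id.mul hq''c).sub hq'c
    have h := aux_anti _ (fun x => x * (4 * q' x / q x ^ 3)) hc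
      (fun x hx => by
        have hd := ((hasDerivAt_id x).mul (hq''d x hx)).sub (hq'' x (hIoo hx))
        refine hd.congr_deriv ?_
        simp only [id_eq]
        ring)
      (fun x hx => by
        have h1 : 4 * q' x / q x ^ 3 ≤ 0 :=
          div_nonpos_iff.2 (Or.inr ⟨by linarith [hq'neg x hx],
            (pow_pos (hpos x (hIoo hx)) 3).le⟩)
        exact mul_nonpos_of_nonneg_of_nonpos hx.1.le h1)
    intro t ht
    have h2 := h t ht
    simpa [hq'0] using h2
  -- G : t * q' t - 2 * (q t - q 0) ≤ 0 on Ico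
  have hG : ∀ t ∈ Set.Ico (0:ℝ) 1, t * q' t - 2 * (q t - q 0) ≤ 0 := by
    have hc : ContinuousOn (fun s => s * q' s - 2 * (q s - q 0)) (Set.Ico 0 1) :=
      (continuousOn_id.mul hq'c).sub (continuousOn_const.mul (hqc.sub continuousOn_const))
    have h := aux_anti _ (fun x => x * q'' x - q' x) hc
      (fun x hx => by
        have hd := ((hasDerivAt_id x).mul (hq'' x (hIoo hx))).sub
          (((hq' x (hIoo hx)).sub_const (q 0)).const_mul 2)
        refine hd.congr_deriv ?_
        simp only [id_eq]
        ring)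
      (fun x hx => hG1 x (hIoo hx))
    intro t ht
    have h2 := h t ht
    simpa [hq'0] using h2
  -- g : q t ≤ q 0 - t^2 / q 0 ^2 on Ico, hence 1 ≤ q 0
  have hg1 : ∀ t ∈ Set.Ico (0:ℝ) 1, 0 ≤ -2 * t / q 0 ^ 2 - q' t := by
    have hc : ContinuousOn (fun s => -2 * s / q 0 ^ 2 - q' s) (Set.Ico 0 1) :=
      ((continuousOn_const.mul continuousOn_id).div_const _).sub hq'c
    have h := aux_mono _ (fun x => -2 / q 0 ^ 2 - q'' x) hc
      (fun x hx => by
        have hd := (((hasDerivAt_id x).const_mul (-2:ℝ)).div_const (q 0 ^ 2)).sub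
          (hq'' x (hIoo hx))
        refine hd.congr_deriv ?_
        ring)
      (fun x hx => by
        show (0:ℝ) ≤ -2 / q 0 ^ 2 - q'' x
        rw [hODE x (hIoo hx)]
        have hqx : 0 < q x := hpos x (hIoo hx)
        have hle : q x ≤ q 0 := hqle x ⟨hx.1.le, hx.2.le⟩
        have h2 : 2 / q 0 ^ 2 ≤ 2 / q x ^ 2 := by
          apply div_le_div_of_nonneg_left (by norm_num) (by positivity)
          nlinarith
        rw [neg_div, neg_div]
        linarith)
    intro t ht
    have h2 := h t ht
    simpa [hq'0] using h2
  have hg : ∀ t ∈ Set.Ico (0:ℝ) 1, 0 ≤ q 0 - t ^ 2 / q 0 ^ 2 - q t := by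
    have hc : ContinuousOn (fun s => q 0 - s ^ 2 / q 0 ^ 2 - q s) (Set.Ico 0 1) :=
      (continuousOn_const.sub ((continuousOn_id.pow 2).div_const _)).sub hqc
    have h := aux_mono _ (fun x => -2 * x / q 0 ^ 2 - q' x) hc
      (fun x hx => by
        have hd := ((hasDerivAt_const x (q 0)).sub
          ((hasDerivAt_pow 2 x).div_const (q 0 ^ 2))).sub (hq' x (hIoo hx))
        refine hd.congr_deriv ?_
        push_cast
        ring)
      (fun x hx => hg1 x (hIoo hx))
    intro t ht
    have h2 := h t ht
    norm_num at h2
    linarith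
  have hq01 : 1 ≤ q 0 := by
    have hcg : ContinuousWithinAt (fun s => q 0 - s ^ 2 / q 0 ^ 2 - q s) (Set.Ico 0 1) 1 := by
      have hq1c : ContinuousWithinAt q (Set.Ico 0 1) 1 :=
        (hcont 1 (Set.right_mem_Icc.2 zero_le_one)).mono Set.Ico_subset_Icc_self
      exact (continuousWithinAt_const.sub
        ((continuousWithinAt_id.pow 2).div_const _)).sub hq1c
    have hne : (nhdsWithin (1:ℝ) (Set.Ico (0:ℝ) 1)).NeBot := right_nhdsWithin_Ico_neBot one_pos
    have hlim : 0 ≤ q 0 - 1 ^ 2 / q 0 ^ 2 - q 1 := by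
      apply ge_of_tendsto hcg
      filter_upwards [eventually_mem_nhdsWithin] with s hs
      exact hg s hs
    rw [hq1] at hlim
    have h3 : 1 ≤ q 0 ^ 3 := by
      have h4 : 1 / q 0 ^ 2 ≤ q 0 := by nlinarith
      have h5 := (div_le_iff₀ (by positivity : (0:ℝ) < q 0 ^ 2)).1 h4
      nlinarith
    nlinarith [sq_nonneg (q 0 - 1), sq_nonneg (q 0 + 1)]
  -- upper bound q 0 ≤ 2 + f/2
  have hub : q 0 ≤ 2 + f / 2 := by
    rcases le_or_gt (q 0) 2 with h2 | h2
    · linarith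
    · obtain ⟨r, hrpos, hr2⟩ : ∃ r : ℝ, 0 < r ∧ r ^ 2 = q 0 :=
        ⟨Real.sqrt (q 0), Real.sqrt_pos.2 hq0, Real.sq_sqrt hq0.le⟩
      have hrgt : 1 < r := by nlinarith
      obtain ⟨u, hupos, hu⟩ : ∃ u : ℝ, 0 < u ∧ r * u = 1 :=
        ⟨1 / r, by positivity, by field_simp⟩
      have hu1 : u < 1 := by nlinarith [mul_pos (sub_pos.2 hrgt) hupos]
      have hxlt : u < q 0 := by linarith
      have hmem : u ∈ Set.Icc (q 1) (q 0) := by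
        constructor
        · rw [hq1]; exact hupos.le
        · exact hxlt.le
      obtain ⟨s, hs, hqs⟩ := intermediate_value_Icc' zero_le_one hcont hmem
      have hs0 : s ≠ 0 := by
        intro h
        rw [h] at hqs
        exact absurd hqs (ne_of_gt hxlt)
      have hs1 : s ≠ 1 := by
        intro h
        rw [h, hq1] at hqs
        exact absurd hqs.symm (ne_of_gt hupos)
      have hsIoo : s ∈ Set.Ioo (0:ℝ) 1 :=
        ⟨lt_of_le_of_ne hs.1 (Ne.symm hs0), lt_of_le_of_ne hs.2 hs1⟩
      have hGs := hG s (hIoo hsIoo)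
      have hlt : q s < q 0 := hQanti (Set.left_mem_Icc.2 zero_le_one) hs hsIoo.1
      -- key squared inequality
      have h1 : 2 * (q 0 - q s) ≤ -(s * q' s) := by linarith
      have h2' : (0:ℝ) ≤ q 0 - q s := by linarith
      have h3 : (2 * (q 0 - q s)) * (2 * (q 0 - q s)) ≤ (-(s * q' s)) * (-(s * q' s)) :=
        mul_self_le_mul_self (by linarith) h1
      have h4 : s ^ 2 * q' s ^ 2 ≤ q' s ^ 2 := by
        nlinarith [mul_nonneg (show (0:ℝ) ≤ 1 - s ^ 2 by nlinarith [hsIoo.1, hsIoo.2])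
          (sq_nonneg (q' s))]
      have hkey : 4 * (q 0 - q s) ^ 2 ≤ q' s ^ 2 := by nlinarith [h3, h4]
      -- energy at s
      have hEs := hEeq s (hIoo hsIoo)
      rw [hq'0, hqs] at hEs
      have h4qs : 4 / u = 4 * r := by
        rw [div_eq_iff hupos.ne']
        linear_combination (-4) * hu
      have h4q0 : 4 / q 0 = 4 * u ^ 2 := by
        rw [← hr2, div_eq_iff (by positivity : (r:ℝ) ^ 2 ≠ 0)]
        linear_combination (-4 * (r * u) - 4) * hu
      rw [h4qs, h4q0] at hEs
      -- hEs : q' s ^ 2 - 4 * r + 2 * f * u = 0 ^ 2 - 4 * u ^ 2 + 2 * f * q 0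
      rw [hqs] at hkey
      -- hkey : 4 * (q 0 - u) ^ 2 ≤ q' s ^ 2
      have hA : 0 < q 0 - u := by linarith
      have hur2 : u * q 0 = r := by
        rw [← hr2]
        linear_combination r * hu
      have hq'sq : q' s ^ 2 = 4 * u * q 0 - 4 * u ^ 2 + 2 * f * q 0 - 2 * f * u := by
        linear_combination hEs - 4 * hur2
      have hAA : 4 * (q 0 - u) ^ 2 ≤ 4 * u * (q 0 - u) + 2 * f * (q 0 - u) := by
        rw [hq'sq] at hkey
        linarith [hkey]
      nlinarith [hAA, hA, hu1, hupos, hf, mul_pos hA (sub_pos.2 hu1)]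
  refine ⟨hconc, fun a ha b hb hab => hQanti (Set.Ioo_subset_Icc_self ha)
    (Set.Ioo_subset_Icc_self hb) hab, hq01, hub, ?_, ?_⟩
  · -- lower integral bound
    have hInt : IntervalIntegrable q volume 0 1 := by
      apply ContinuousOn.intervalIntegrable
      rwa [Set.uIcc_of_le zero_le_one]
    have hchord : ∀ t ∈ Set.Icc (0:ℝ) 1, (1 - t) * q 0 ≤ q t := by
      intro t ht
      have h := hconc.concaveOn.2 (Set.left_mem_Icc.2 zero_le_one)
        (Set.right_mem_Icc.2 zero_le_one)
        (by linarith [ht.2] : (0:ℝ) ≤ 1 - t) ht.1 (by ring)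
      simpa [hq1] using h
    have h1 : (∫ t in (0:ℝ)..1, (1 - t) * q 0) ≤ ∫ t in (0:ℝ)..1, q t :=
      intervalIntegral.integral_mono_on zero_le_one
        (Continuous.intervalIntegrable (by continuity) 0 1) hInt hchord
    have h2 : (∫ t in (0:ℝ)..1, (1 - t) * q 0) = q 0 / 2 := by
      rw [intervalIntegral.integral_mul_const]
      have h3 : (∫ t in (0:ℝ)..1, (1 - t)) = 1 / 2 := by
        have h4 : (∫ t in (0:ℝ)..1, ((1:ℝ) - t)) =
            (∫ t in (0:ℝ)..1, (1:ℝ)) - ∫ t in (0:ℝ)..1, t :=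
          intervalIntegral.integral_sub intervalIntegrable_const
            intervalIntegral.intervalIntegrable_id
        rw [h4, integral_id]
        norm_num
      rw [h3]; ring
    linarith
  · -- upper integral bound
    have hInt : IntervalIntegrable q volume 0 1 := by
      apply ContinuousOn.intervalIntegrable
      rwa [Set.uIcc_of_le zero_le_one]
    have h1 : (∫ t in (0:ℝ)..1, q t) ≤ ∫ t in (0:ℝ)..1, q 0 :=
      intervalIntegral.integral_mono_on zero_le_one hInt intervalIntegrable_const hqle
    simpa using h1
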